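/- Let x = p·q where p and q are odd primes, not necessarily distinct. Then G(x) = G(x-1) + 1. -/

import Mathlib

/-- `G x` is the cardinality of the set `{⌊x/n⌋ : 1 ≤ n ≤ x, ⌊x/n⌋ prime}`. -/
def G (x : ℕ) : ℕ := (((Finset.Icc 1 x).image (fun n => x / n)).filter Nat.Prime).card

private lemma mul_pred_add (a b : ℕ) (hb : 1 ≤ b) : a * (b - 1) + a = a * b := by
  obtain ⟨b', rfl⟩ : ∃ b', b = b' + 1 := ⟨b - 1, by omega⟩
  simp [Nat.mul_succ]

private lemma dvd_semiprime {p q n : ℕ} (hp : p.Prime) (hq : q.Prime) (h : n ∣ p * q) :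
    n = 1 ∨ n = p ∨ n = q ∨ n = p * q := by
  by_cases hpn : p ∣ n
  · obtain ⟨m, rfl⟩ := hpn
    have hm : m ∣ q := (Nat.mul_dvd_mul_iff_left hp.pos).mp h
    rcases hq.eq_one_or_self_of_dvd m hm with rfl | rfl
    · right; left; simp
    · right; right; right; rfl
  · have hco : n.Coprime p := Nat.coprime_comm.mp (hp.coprime_iff_not_dvd.mpr hpn)
    have hnq : n ∣ q := hco.dvd_of_dvd_mul_left h
    rcases hq.eq_one_or_self_of_dvd n hnq with rfl | rfl
    · left; rfl
    · right; right; left; rfl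

private lemma key (p q : ℕ) (hp : p.Prime) (hq : q.Prime) (hop : Odd p) (hoq : Odd q)
    (hpq : p ≤ q) : G (p * q) = G (p * q - 1) + 1 := by
  have hp3 : 3 ≤ p := by have h1 := hp.two_le; have h2 := Nat.odd_iff.mp hop; omega
  have hq3 : 3 ≤ q := by have h1 := hq.two_le; have h2 := Nat.odd_iff.mp hoq; omega
  have hx9 : 9 ≤ p * q := by
    calc 9 = 3 * 3 := rfl
    _ ≤ p * q := Nat.mul_le_mul hp3 hq3
  have hxodd : (p * q) % 2 = 1 := Nat.odd_iff.mp (hop.mul hoq)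
  have hpodd : p % 2 = 1 := Nat.odd_iff.mp hop
  have hqodd : q % 2 = 1 := Nat.odd_iff.mp hoq
  have hple : p ≤ p * q := Nat.le_mul_of_pos_right p hq.pos
  have hqle : q ≤ p * q := Nat.le_mul_of_pos_left q hp.pos
  have hxp : p * q / p = q := Nat.mul_div_cancel_left q hp.pos
  have hxq : p * q / q = p := by rw [mul_comm]; exact Nat.mul_div_cancel_left p hq.pos
  -- 2 is always attained as a value of ⌊x/m⌋
  have h2A : ∃ m, (1 ≤ m ∧ m ≤ p * q) ∧ p * q / m = 2 := by
    refine ⟨(p * q - 1) / 2, ⟨by omega, by omega⟩, ?_⟩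
    have h2 : 2 * ((p * q - 1) / 2) = p * q - 1 := by omega
    exact Nat.div_eq_of_lt_le (by omega) (by omega)
  -- key division computations
  have hdp : (p * q - 1) / p = q - 1 := by
    apply Nat.div_eq_of_lt_le
    · have h1 := mul_pred_add q p (by omega)
      have h2 : q * p = p * q := mul_comm q p
      have h3 : (q - 1) * p = p * (q - 1) := mul_comm _ _
      have h4 := mul_pred_add p q (by omega)
      omega
    · have h1 := mul_pred_add p q (by omega)
      have h2 : (q - 1 + 1) * p = (q - 1) * p + p := by ring
      have h3 : (q - 1) * p = p * (q - 1) := mul_comm _ _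
      omega
  have hdq : (p * q - 1) / q = p - 1 := by
    apply Nat.div_eq_of_lt_le
    · have h3 : (p - 1) * q = q * (p - 1) := mul_comm _ _
      have h4 := mul_pred_add q p (by omega)
      have h2 : q * p = p * q := mul_comm q p
      omega
    · have h4 := mul_pred_add q p (by omega)
      have h2 : (p - 1 + 1) * q = (p - 1) * q + q := by ring
      have h3 : (p - 1) * q = q * (p - 1) := mul_comm _ _
      have h5 : q * p = p * q := mul_comm q p
      omega
  have hdq1 : p < q → (p * q - 1) / (q - 1) = p := by
    intro hplt
    apply Nat.div_eq_of_lt_le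
    · have h1 := mul_pred_add p q (by omega)
      omega
    · have h1 := mul_pred_add (p + 1) q (by omega)
      have h2 : (p + 1) * q = p * q + q := by ring
      omega
  -- q is not a value of ⌊(x-1)/n⌋
  have hqnot : ∀ n, 1 ≤ n → n ≤ p * q - 1 → (p * q - 1) / n ≠ q := by
    intro n h1 h2 heq
    have hub := Nat.div_mul_le_self (p * q - 1) n
    rw [heq] at hub
    have hnp : n < p := by
      by_contra hc
      push_neg at hc
      have h3 : q * p ≤ q * n := Nat.mul_le_mul_left q hc
      have h4 : q * p = p * q := mul_comm q p
      omega
    have h3 : q * n ≤ q * (p - 1) := Nat.mul_le_mul_left q (by omega)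
    have h4 := mul_pred_add q p (by omega)
    have h5 : q * p = p * q := mul_comm q p
    have h6 : (q + 1) * n ≤ p * q - 1 := by
      have : (q + 1) * n = q * n + n := by ring
      omega
    have h7 : q + 1 ≤ (p * q - 1) / n := (Nat.le_div_iff_mul_le (by omega)).mpr h6
    omega
  -- the set equality
  have hsetEq : ((Finset.Icc 1 (p * q)).image (fun n => p * q / n)).filter Nat.Prime
      = insert q (((Finset.Icc 1 (p * q - 1)).image
          (fun n => (p * q - 1) / n)).filter Nat.Prime) := by
    ext r
    simp only [Finset.mem_filter, Finset.mem_image, Finset.mem_Icc, Finset.mem_insert]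
    constructor
    · rintro ⟨⟨n, ⟨hn1, hnx⟩, hfn⟩, hr⟩
      by_cases hd : n ∣ p * q
      · rcases dvd_semiprime hp hq hd with h1 | h1 | h1 | h1 <;> rw [h1] at hfn
        · exfalso
          rw [Nat.div_one] at hfn
          rw [← hfn] at hr
          rcases Nat.prime_mul_iff.mp hr with ⟨_, h⟩ | ⟨_, h⟩ <;> omega
        · left; exact hxp.symm.trans hfn |>.symm
        · rcases eq_or_lt_of_le hpq with heq | hplt
          · left
            have : p * q / q = q := by rw [heq] at hxq ⊢; exact hxq
            exact this.symm.trans hfn |>.symm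
          · right
            refine ⟨⟨q - 1, ⟨by omega, by omega⟩, ?_⟩, hr⟩
            rw [hdq1 hplt]
            exact hxq.symm.trans hfn
        · exfalso
          rw [Nat.div_self (by omega : 0 < p * q)] at hfn
          rw [← hfn] at hr
          exact Nat.not_prime_one hr
      · have hsd := @Nat.succ_div (p * q - 1) n
        rw [(by omega : p * q - 1 + 1 = p * q), if_neg hd, Nat.add_zero] at hsd
        have hnlt : n ≠ p * q := fun h => hd (h ▸ dvd_refl _)
        right
        exact ⟨⟨n, ⟨hn1, by omega⟩, hsd.symm.trans hfn⟩, hr⟩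
    · rintro (rfl | ⟨⟨n, ⟨hn1, hnx⟩, hfn⟩, hr⟩)
      · exact ⟨⟨p, ⟨by omega, by omega⟩, hxp⟩, hq⟩
      · by_cases hd : n ∣ p * q
        · rcases dvd_semiprime hp hq hd with h1 | h1 | h1 | h1 <;> rw [h1] at hfn hnx
          · exfalso
            rw [Nat.div_one] at hfn
            have hev := (hr.even_iff).mp (by rw [← hfn]; exact Nat.even_iff.mpr (by omega))
            omega
          · have hrq : r = q - 1 := hdp.symm.trans hfn |>.symm
            have hr2 : r = 2 := (hr.even_iff).mp (by rw [hrq]; exact Nat.even_iff.mpr (by omega))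
            subst hr2
            exact ⟨h2A, hr⟩
          · have hrp : r = p - 1 := hdq.symm.trans hfn |>.symm
            have hr2 : r = 2 := (hr.even_iff).mp (by rw [hrp]; exact Nat.even_iff.mpr (by omega))
            subst hr2
            exact ⟨h2A, hr⟩
          · omega
        · have hsd := @Nat.succ_div (p * q - 1) n
          rw [(by omega : p * q - 1 + 1 = p * q), if_neg hd, Nat.add_zero] at hsd
          exact ⟨⟨n, ⟨hn1, by omega⟩, hsd.trans hfn⟩, hr⟩
  have hqmem : q ∉ (((Finset.Icc 1 (p * q - 1)).image
      (fun n => (p * q - 1) / n)).filter Nat.Prime) := by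
    intro hmem
    rw [Finset.mem_filter] at hmem
    obtain ⟨hmem, -⟩ := hmem
    rw [Finset.mem_image] at hmem
    obtain ⟨n, hn, hval⟩ := hmem
    rw [Finset.mem_Icc] at hn
    exact hqnot n hn.1 hn.2 hval
  unfold G
  rw [hsetEq, Finset.card_insert_of_notMem hqmem]

theorem G_semiprime (p q x : ℕ) (hp : p.Prime) (hq : q.Prime)
    (hop : Odd p) (hoq : Odd q) (hx : x = p * q) :
    G x = G (x - 1) + 1 := by
  subst hx
  rcases le_total p q with h | h
  · exact key p q hp hq hop hoq h
  · rw [mul_comm]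
    exact key q p hq hp hoq hop h
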